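/- Let U ⊆ ℝᵐ be compact and nonempty, A ⊆ ℝⁿ compact, δ > 0, and let f : ℝⁿ × ℝᵐ → ℝⁿ be continuous and locally Lipschitz in its first argument uniformly in the second over U (for every compact K ⊆ ℝⁿ there is L ≥ 0 with ‖f(x,u) − f(y,u)‖ ≤ L‖x − y‖ for all x, y ∈ K, u ∈ U). Suppose H : ℝⁿ × ℝᵐ → C([0,δ], ℝⁿ) is such that for every (x₀, u) ∈ A × U the curve H(x₀,u) satisfies H(x₀,u)(0) = x₀ and is differentiable on [0,δ] with derivative f(H(x₀,u)(t), u) for all t ∈ [0,δ]. Then the image H(A × U) is a compact subset of C([0,δ], ℝⁿ) equipped with the supremum norm, and the union of the ranges ⋃_{(x₀,u) ∈ A × U} { H(x₀,u)(t) : t ∈ [0,δ] } is a bounded subset of ℝⁿ. -/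

import Mathlib

open Set Metric Real

/-- A crude upper bound for `gronwallBound`. -/
lemma gronwallBound_le_aux {d L e x T : ℝ} (hd : 0 ≤ d) (hL : 0 ≤ L) (he : 0 ≤ e)
    (hx : 0 ≤ x) (hxT : x ≤ T) :
    gronwallBound d L e x ≤ (d + e * T) * Real.exp (L * T) := by
  have hT0 : 0 ≤ T := hx.trans hxT
  rcases eq_or_lt_of_le hL with h0 | hLpos
  · subst h0
    rw [gronwallBound_K0]
    simp only [zero_mul, Real.exp_zero, mul_one]
    nlinarith
  · rw [gronwallBound_of_K_ne_0 hLpos.ne']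
    have hE : Real.exp (L * x) ≤ Real.exp (L * T) :=
      Real.exp_le_exp.2 (by nlinarith)
    have hEpos : 0 < Real.exp (L * x) := Real.exp_pos _
    have hETpos : 0 < Real.exp (L * T) := Real.exp_pos _
    -- `exp s - 1 ≤ s * exp s` for `s ≥ 0`
    have h4 : (1 - L * x) * Real.exp (L * x) ≤ 1 := by
      have h1 := Real.add_one_le_exp (-(L * x))
      have h3 : Real.exp (-(L * x)) * Real.exp (L * x) = 1 := by
        rw [← Real.exp_add]; simp
      nlinarith
    have h5 : e / L * (Real.exp (L * x) - 1) ≤ e * x * Real.exp (L * x) := by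
      rw [div_mul_eq_mul_div, div_le_iff₀ hLpos]
      nlinarith
    have h6 : e * x * Real.exp (L * x) ≤ e * T * Real.exp (L * T) := by
      have h61 : e * x ≤ e * T := by nlinarith
      exact mul_le_mul h61 hE hEpos.le (by nlinarith)
    have h7 : d * Real.exp (L * x) ≤ d * Real.exp (L * T) := by nlinarith
    nlinarith

theorem flow_image_compact_and_ranges_bounded {n m : ℕ}
    (U : Set (EuclideanSpace ℝ (Fin m))) (hUc : IsCompact U) (hUne : U.Nonempty)
    (A : Set (EuclideanSpace ℝ (Fin n))) (hAc : IsCompact A)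
    (δ : ℝ) (hδ : 0 < δ)
    (f : EuclideanSpace ℝ (Fin n) × EuclideanSpace ℝ (Fin m) → EuclideanSpace ℝ (Fin n))
    (hfc : Continuous f)
    -- locally Lipschitz in the first argument, uniformly in the second over `U`
    (hfl : ∀ K : Set (EuclideanSpace ℝ (Fin n)), IsCompact K → ∃ L ≥ (0 : ℝ),
      ∀ x ∈ K, ∀ y ∈ K, ∀ u ∈ U, ‖f (x, u) - f (y, u)‖ ≤ L * ‖x - y‖)
    -- `H (x₀, u)` is the solution curve of `ẋ = f(x, u)`, `x(0) = x₀`, on `[0, δ]`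
    (H : EuclideanSpace ℝ (Fin n) × EuclideanSpace ℝ (Fin m) →
      C(Set.Icc (0 : ℝ) δ, EuclideanSpace ℝ (Fin n)))
    (hinit : ∀ p ∈ A ×ˢ U, H p ⟨0, Set.left_mem_Icc.mpr hδ.le⟩ = p.1)
    (hderiv : ∀ p ∈ A ×ˢ U, ∀ t ∈ Set.Icc (0 : ℝ) δ,
      HasDerivWithinAt (fun s : ℝ => H p (Set.projIcc 0 δ hδ.le s))
        (f (H p (Set.projIcc 0 δ hδ.le t), p.2)) (Set.Icc (0 : ℝ) δ) t) :
    -- the image `H(A × U)` is compact in `C([0,δ], ℝⁿ)` (sup-norm topology), and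
    -- the union of the ranges of the curves is a bounded subset of `ℝⁿ`
    IsCompact (H '' (A ×ˢ U)) ∧
    Bornology.IsBounded (⋃ p ∈ A ×ˢ U, Set.range fun t => H p t) := by
  have hSc : IsCompact (A ×ˢ U) := hAc.prod hUc
  -- Main step: `H` is continuous on `A ×ˢ U` (continuous dependence on initial data)
  have hH : ContinuousOn H (A ×ˢ U) := by
    rintro ⟨x₀, u₀⟩ hp₀
    rw [Metric.continuousWithinAt_iff]
    intro ε hε
    set c : ℝ := min (ε / 2) 1 with hcdef
    have hc : 0 < c := lt_min (by linarith) one_pos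
    have hc1 : c ≤ 1 := min_le_right _ _
    -- the reference curve
    set g₀ : ℝ → EuclideanSpace ℝ (Fin n) :=
      fun s => H (x₀, u₀) (Set.projIcc 0 δ hδ.le s) with hg₀def
    have hg₀c : Continuous g₀ := (H (x₀, u₀)).continuous.comp continuous_projIcc
    set C₀ : Set (EuclideanSpace ℝ (Fin n)) := Set.range (H (x₀, u₀)) with hC₀def
    have hC₀c : IsCompact C₀ := isCompact_range (H (x₀, u₀)).continuous
    have hg₀C₀ : ∀ s : ℝ, g₀ s ∈ C₀ := fun s => ⟨_, rfl⟩
    set K : Set (EuclideanSpace ℝ (Fin n)) := Metric.cthickening 1 C₀ with hKdef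
    have hKc : IsCompact K := hC₀c.cthickening
    have hCK : C₀ ⊆ K := Metric.self_subset_cthickening _
    obtain ⟨L, hL0, hLip⟩ := hfl K hKc
    set G := Real.exp (L * δ) with hGdef
    have hGpos : 0 < G := Real.exp_pos _
    have hG1 : 1 ≤ G := Real.one_le_exp (by positivity)
    set ε' : ℝ := c / (2 * (1 + δ) * G) with hε'def
    have hden : 0 < 2 * (1 + δ) * G := by positivity
    have hε'pos : 0 < ε' := div_pos hc hden
    have hε'c : ε' < c := by
      rw [hε'def, div_lt_iff₀ hden]
      nlinarith [mul_pos hc (show (0:ℝ) < 2 * (1 + δ) * G - 1 by nlinarith)]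
    -- uniform continuity of `f` on `K ×ˢ U`
    have hKU : IsCompact (K ×ˢ U) := hKc.prod hUc
    have huc := hKU.uniformContinuousOn_of_continuous hfc.continuousOn
    rw [Metric.uniformContinuousOn_iff_le] at huc
    obtain ⟨r, hr, hruc⟩ := huc ε' hε'pos
    refine ⟨min ε' r, lt_min hε'pos hr, ?_⟩
    rintro ⟨x, u⟩ hpS hpd
    have hxA : x ∈ A := hpS.1
    have huU : u ∈ U := hpS.2
    have hu₀U : u₀ ∈ U := hp₀.2
    have hdx : dist x x₀ < ε' := by
      have h1 : dist x x₀ ≤ dist ((x, u)) ((x₀, u₀)) := by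
        rw [Prod.dist_eq]; exact le_max_left _ _
      exact lt_of_le_of_lt h1 (hpd.trans_le (min_le_left _ _))
    have hdu : dist u u₀ < r := by
      have h1 : dist u u₀ ≤ dist ((x, u)) ((x₀, u₀)) := by
        rw [Prod.dist_eq]; exact le_max_right _ _
      exact lt_of_le_of_lt h1 (hpd.trans_le (min_le_right _ _))
    set g : ℝ → EuclideanSpace ℝ (Fin n) :=
      fun s => H (x, u) (Set.projIcc 0 δ hδ.le s) with hgdef
    have hgc : Continuous g := (H (x, u)).continuous.comp continuous_projIcc
    have hg0 : g 0 = x := by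
      rw [hgdef]; simp only [Set.projIcc_left]
      exact hinit (x, u) hpS
    have hg₀0 : g₀ 0 = x₀ := by
      rw [hg₀def]; simp only [Set.projIcc_left]
      exact hinit (x₀, u₀) hp₀
    have hgd : ∀ t ∈ Set.Ico (0 : ℝ) δ, HasDerivWithinAt g (f (g t, u)) (Set.Ici t) t := by
      intro t ht
      have h1 := hderiv (x, u) hpS t (Set.Ico_subset_Icc_self ht)
      have h2 : Set.Icc (0 : ℝ) δ ∈ nhdsWithin t (Set.Ici t) := Icc_mem_nhdsGE_of_mem ht
      have h3 : Set.projIcc 0 δ hδ.le t = ⟨t, Set.Ico_subset_Icc_self ht⟩ :=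
        Set.projIcc_of_mem _ _
      exact h1.mono_of_mem_nhdsWithin h2
    have hg₀d : ∀ t ∈ Set.Ico (0 : ℝ) δ,
        HasDerivWithinAt g₀ (f (g₀ t, u₀)) (Set.Ici t) t := by
      intro t ht
      have h1 := hderiv (x₀, u₀) hp₀ t (Set.Ico_subset_Icc_self ht)
      have h2 : Set.Icc (0 : ℝ) δ ∈ nhdsWithin t (Set.Ici t) := Icc_mem_nhdsGE_of_mem ht
      exact h1.mono_of_mem_nhdsWithin h2
    -- Lipschitz vector field
    have hvlip : ∀ _t : ℝ, LipschitzOnWith L.toNNReal (fun y => f (y, u₀)) K := by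
      intro t
      apply LipschitzOnWith.of_dist_le_mul
      intro a ha b hb
      have h1 := hLip a ha b hb u₀ hu₀U
      rw [dist_eq_norm, dist_eq_norm, Real.coe_toNNReal L hL0]
      exact h1
    -- key estimate: the two curves stay `c`-close on all of `[0, δ]`
    have key : ∀ t ∈ Set.Icc (0 : ℝ) δ, dist (g t) (g₀ t) ≤ c := by
      by_contra hbad
      push_neg at hbad
      obtain ⟨t₁, ht₁, hgt⟩ := hbad
      set B : Set ℝ := {t ∈ Set.Icc (0 : ℝ) δ | c < dist (g t) (g₀ t)} with hBdef
      have hBne : B.Nonempty := ⟨t₁, ht₁, hgt⟩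
      have hBbd : BddBelow B := ⟨0, fun t ht => ht.1.1⟩
      set T := sInf B with hTdef
      have hTmem : T ∈ closure B := csInf_mem_closure hBne hBbd
      have hφc : Continuous (fun s => dist (g s) (g₀ s)) := hgc.dist hg₀c
      have hTIcc : T ∈ Set.Icc (0 : ℝ) δ :=
        closure_minimal (fun t ht => ht.1) isClosed_Icc hTmem
      have hTge : c ≤ dist (g T) (g₀ T) :=
        closure_minimal (fun t (ht : t ∈ B) => ht.2.le)
          (isClosed_le continuous_const hφc) hTmem
      have hlt : ∀ s ∈ Set.Icc (0 : ℝ) δ, s < T → dist (g s) (g₀ s) ≤ c := by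
        intro s hs hsT
        by_contra h
        push_neg at h
        exact absurd (csInf_le hBbd ⟨hs, h⟩) (not_le.2 hsT)
      have hT0 : 0 < T := by
        rcases hTIcc.1.lt_or_eq with h | h
        · exact h
        · exfalso
          have h2 : dist (g 0) (g₀ 0) < c := by
            rw [hg0, hg₀0]; exact hdx.trans_le hε'c.le
          rw [← h] at hTge
          exact absurd hTge (not_le.2 h2)
      have hTle : dist (g T) (g₀ T) ≤ c := by
        have hsub : Set.Ico (0 : ℝ) T ⊆ {t | dist (g t) (g₀ t) ≤ c} := fun s hs =>
          hlt s ⟨hs.1, hs.2.le.trans hTIcc.2⟩ hs.2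
        have hcl : T ∈ closure (Set.Ico (0 : ℝ) T) := by
          rw [closure_Ico hT0.ne]
          exact Set.right_mem_Icc.2 hT0.le
        exact closure_minimal hsub (isClosed_le hφc continuous_const) hcl
      have hIccT : ∀ s ∈ Set.Icc (0 : ℝ) T, dist (g s) (g₀ s) ≤ c := by
        intro s hs
        rcases hs.2.lt_or_eq with h | h
        · exact hlt s ⟨hs.1, h.le.trans hTIcc.2⟩ h
        · rw [h]; exact hTle
      have hg₀K : ∀ s : ℝ, g₀ s ∈ K := fun s => hCK (hg₀C₀ s)
      have hgK : ∀ s ∈ Set.Icc (0 : ℝ) T, g s ∈ K := by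
        intro s hs
        exact Metric.mem_cthickening_of_dist_le (g s) (g₀ s) 1 C₀ (hg₀C₀ s)
          ((hIccT s hs).trans hc1)
      have hIcoT : Set.Ico (0 : ℝ) T ⊆ Set.Ico 0 δ := fun s hs =>
        ⟨hs.1, lt_of_lt_of_le hs.2 hTIcc.2⟩
      -- Grönwall estimate on `[0, T]`
      have grb := dist_le_of_approx_trajectories_ODE_of_mem
        (v := fun _ y => f (y, u₀)) (s := fun _ => K) (K := L.toNNReal)
        (εf := ε') (εg := 0) (δ := ε')
        (fun t _ => hvlip t)
        (hgc.continuousOn (s := Set.Icc 0 T))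
        (fun t ht => hgd t (hIcoT ht))
        (f_bound := ?_)
        (fun t ht => hgK t (Set.Ico_subset_Icc_self ht))
        (hg₀c.continuousOn (s := Set.Icc 0 T))
        (fun t ht => hg₀d t (hIcoT ht))
        (g_bound := ?_)
        (fun t ht => hg₀K t)
        (ha := ?_)
      · have hgbT := grb T (Set.right_mem_Icc.2 hT0.le)
        rw [sub_zero, add_zero] at hgbT
        have hub : gronwallBound ε' (↑L.toNNReal) ε' T ≤ (ε' + ε' * δ) * G := by
          rw [hGdef]
          have hco : ((L.toNNReal : ℝ)) = L := Real.coe_toNNReal L hL0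
          rw [hco]
          exact gronwallBound_le_aux hε'pos.le hL0 hε'pos.le hT0.le hTIcc.2
        have heq : (ε' + ε' * δ) * G = c / 2 := by
          rw [hε'def]; field_simp
        have : dist (g T) (g₀ T) ≤ c / 2 := hgbT.trans (hub.trans_eq heq)
        linarith [hTge, hc]
      · -- f_bound
        intro t ht
        have htIcc : t ∈ Set.Icc (0 : ℝ) T := Set.Ico_subset_Icc_self ht
        have hmem1 : (g t, u) ∈ K ×ˢ U := ⟨hgK t htIcc, huU⟩
        have hmem2 : (g t, u₀) ∈ K ×ˢ U := ⟨hgK t htIcc, hu₀U⟩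
        have hdd : dist ((g t, u)) ((g t, u₀)) < r := by
          rw [Prod.dist_eq]
          simp only [dist_self]
          rw [max_eq_right dist_nonneg]
          exact hdu
        exact hruc _ hmem1 _ hmem2 hdd.le
      · -- g_bound
        intro t ht
        simp
      · -- initial distance
        rw [hg0, hg₀0]
        exact hdx.le
    -- conclude the distance bound in `C([0,δ])`
    have hdist : dist (H (x, u)) (H (x₀, u₀)) ≤ c := by
      rw [ContinuousMap.dist_le hc.le]
      intro t
      have h1 := key t t.2
      rw [hgdef, hg₀def] at h1
      simp only [Set.projIcc_val] at h1
      exact h1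
    have : c < ε := lt_of_le_of_lt (min_le_left _ _) (by linarith)
    exact lt_of_le_of_lt hdist this
  have hcomp : IsCompact (H '' (A ×ˢ U)) := hSc.image_of_continuousOn hH
  refine ⟨hcomp, ?_⟩
  have heval : Continuous fun q :
      C(Set.Icc (0 : ℝ) δ, EuclideanSpace ℝ (Fin n)) × Set.Icc (0 : ℝ) δ => q.1 q.2 :=
    continuous_eval
  have hQ : IsCompact ((fun q :
      C(Set.Icc (0 : ℝ) δ, EuclideanSpace ℝ (Fin n)) × Set.Icc (0 : ℝ) δ => q.1 q.2) ''
      ((H '' (A ×ˢ U)) ×ˢ Set.univ)) :=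
    (hcomp.prod isCompact_univ).image heval
  refine hQ.isBounded.subset ?_
  intro y hy
  simp only [Set.mem_iUnion] at hy
  obtain ⟨p, hp, t, rfl⟩ := hy
  exact ⟨(H p, t), ⟨⟨p, hp, rfl⟩, Set.mem_univ _⟩, rfl⟩
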